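/- For all integers m ≥ 0 and w ≥ 0, Σ_{i=0}^{w} C(m+i, m)·2^i = (−1)^{m+1} + 2^{w+1} · Σ_{j=0}^{m} C(m+w+1, m−j)·(−2)^j, where C(a,b) denotes the binomial coefficient. -/

import Mathlib

open Finset

lemma shift_sum (c : ℕ → ℤ) (m : ℕ) :
    ∑ j ∈ range (m + 1 + 1), c (m + 1 - j) * (-2) ^ j =
      (∑ j ∈ range (m + 1), c (m - j) * (-2) ^ j) * (-2) + c (m + 1) := by
  rw [Finset.sum_range_succ']
  simp only [pow_zero, mul_one, Nat.sub_zero]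
  congr 1
  rw [Finset.sum_mul]
  apply Finset.sum_congr rfl
  intro j hj
  have hj' : m + 1 - (j + 1) = m - j := by omega
  rw [hj']; ring

lemma step_lemma (m : ℕ) : ∀ n : ℕ,
    2 * ∑ j ∈ range (m + 1), (Nat.choose (n + 1) (m - j) : ℤ) * (-2) ^ j =
      (∑ j ∈ range (m + 1), (Nat.choose n (m - j) : ℤ) * (-2) ^ j) + Nat.choose n m := by
  induction m with
  | zero => intro n; simp
  | succ m ih =>
    intro n
    have h1 := shift_sum (fun k => (Nat.choose (n + 1) k : ℤ)) m
    have h2 := shift_sum (fun k => (Nat.choose n k : ℤ)) m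
    have hp : (Nat.choose (n + 1) (m + 1) : ℤ) = Nat.choose n m + Nat.choose n (m + 1) := by
      rw [Nat.choose_succ_succ]; push_cast; ring
    rw [h1, h2]
    linear_combination (-2 : ℤ) * ih n + 2 * hp

lemma binom_eval (m : ℕ) :
    ∑ j ∈ range (m + 1), (Nat.choose m (m - j) : ℤ) * (-2) ^ j = (-1) ^ m := by
  rw [← Finset.sum_range_reflect]
  have h := add_pow (1 : ℤ) (-2) m
  have h' : ((1 : ℤ) + -2) ^ m = (-1) ^ m := by norm_num
  rw [h'] at h
  rw [h]
  apply Finset.sum_congr rfl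
  intro j hj
  simp only [Finset.mem_range] at hj
  have e1 : m + 1 - 1 - j = m - j := by omega
  have e2 : m - (m - j) = j := by omega
  rw [e1, e2]
  ring

theorem binomial_weighted_sum (m w : ℕ) :
    ∑ i ∈ Finset.range (w + 1), (Nat.choose (m + i) m : ℤ) * 2 ^ i =
      (-1) ^ (m + 1) +
        2 ^ (w + 1) * ∑ j ∈ Finset.range (m + 1), (Nat.choose (m + w + 1) (m - j) : ℤ) * (-2) ^ j := by
  induction w with
  | zero =>
    have hs := step_lemma m m
    have hb := binom_eval m
    simp only [zero_add, Finset.sum_range_one, add_zero, Nat.choose_self, Nat.cast_one, pow_one,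
      pow_zero, mul_one]
    have hc : (Nat.choose m m : ℤ) = 1 := by simp
    linear_combination -hs - hb - hc
  | succ w ih =>
    rw [Finset.sum_range_succ, ih]
    have hs := step_lemma m (m + w + 1)
    have h1 : m + (w + 1) = m + w + 1 := by ring
    rw [h1]
    linear_combination (-(2 : ℤ) ^ (w + 1)) * hs
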